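/- Strong localization implies robustness (abstract set/measure version): Let X be a measurable space with distance d, let q₁,…,q_K be probability measures on X, and suppose there exist measurable sets S₁,…,S_K ⊆ X with q_k(S_k) ≥ 1 - δ and q_k(⋃_{k'≠k} S_{k'}^{+2ε}) ≤ γ for every k. Define C_k = S_k^{+ε} \ ⋃_{k'≠k} S_{k'}^{+ε} and a classifier f with f(x) = k if x ∈ C_k (and f(x) = 1 otherwise; the C_k are pairwise disjoint). Then for each class k, the q_k-measure of the unsafe set U_k = {x : ∃ x' with d(x,x') ≤ ε and f(x') ≠ k} is at most δ + γ. -/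

import Mathlib

open MeasureTheory

/-- ε-expansion of a set with respect to a distance-like function. -/
def expandSet {X : Type*} (d : X → X → NNReal) (ε : NNReal) (A : Set X) : Set X :=
  {x : X | ∃ a ∈ A, d x a ≤ ε}

/-- Strong localization implies robustness: if each class conditional `q k`
places mass at least `1 - δ` on `S k`, and mass at most `γ` on the `2ε`-expansion
of the other classes' sets, then any classifier predicting `k` on
`C k = (S k)^{+ε} \ ⋃_{k'≠k} (S k')^{+ε}` has unsafe sets of measure at most
`δ + γ`. -/
theorem strong_localization_implies_robust {X : Type*} [MeasurableSpace X]
    (d : X → X → NNReal) (hsymm : ∀ x y, d x y = d y x)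
    (htri : ∀ x y z, d x z ≤ d x y + d y z)
    (ε : NNReal) (δ γ : ENNReal) (K : ℕ)
    (q : Fin K → Measure X) (hq : ∀ k, IsProbabilityMeasure (q k))
    (S : Fin K → Set X) (hSm : ∀ k, MeasurableSet (S k))
    (hS : ∀ k, 1 - δ ≤ q k (S k))
    (hsep : ∀ k, q k (⋃ k' ∈ {k' : Fin K | k' ≠ k}, expandSet d (2 * ε) (S k')) ≤ γ)
    (f : X → Fin K)
    (hf : ∀ k x, x ∈ (expandSet d ε (S k) \ ⋃ k' ∈ {k' : Fin K | k' ≠ k}, expandSet d ε (S k'))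
      → f x = k) :
    ∀ k, q k {x : X | ∃ x' : X, d x x' ≤ ε ∧ f x' ≠ k} ≤ δ + γ := by
  intro k
  have hsub : {x : X | ∃ x' : X, d x x' ≤ ε ∧ f x' ≠ k} ⊆
      (S k)ᶜ ∪ (⋃ k' ∈ {k' : Fin K | k' ≠ k}, expandSet d (2 * ε) (S k')) := by
    intro x hx
    obtain ⟨x', hdx, hfx⟩ := hx
    by_contra h
    rw [Set.mem_union, not_or] at h
    obtain ⟨hxS, hxB⟩ := h
    rw [Set.notMem_compl_iff] at hxS
    apply hfx
    apply hf k x'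
    constructor
    · exact ⟨x, hxS, by rw [hsymm]; exact hdx⟩
    · intro hmem
      apply hxB
      simp only [Set.mem_iUnion] at hmem ⊢
      obtain ⟨k', hk', a, ha, hda⟩ := hmem
      exact ⟨k', hk', a, ha, le_trans (htri x x' a) (by
        calc d x x' + d x' a ≤ ε + ε := add_le_add hdx hda
        _ = 2 * ε := (two_mul ε).symm)⟩
  calc q k {x : X | ∃ x' : X, d x x' ≤ ε ∧ f x' ≠ k}
      ≤ q k ((S k)ᶜ ∪ (⋃ k' ∈ {k' : Fin K | k' ≠ k}, expandSet d (2 * ε) (S k'))) :=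
        measure_mono hsub
    _ ≤ q k (S k)ᶜ + q k (⋃ k' ∈ {k' : Fin K | k' ≠ k}, expandSet d (2 * ε) (S k')) :=
        measure_union_le _ _
    _ ≤ δ + γ := by
        apply add_le_add _ (hsep k)
        haveI := hq k
        rw [measure_compl (hSm k) (measure_ne_top _ _), measure_univ]
        rw [tsub_le_iff_right]
        calc (1 : ENNReal) ≤ δ + (1 - δ) := le_add_tsub
          _ ≤ δ + q k (S k) := add_le_add le_rfl (hS k)
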